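/- Let V be a finite-dimensional complex normed vector space, m ≥ 1 an integer, and f : V → V a map with f(0) = 0 whose m-th iterate is the identity. Suppose f is differentiable at 0 with derivative a continuous linear automorphism L of V whose m-th power is the identity. Define ψ : V → V by ψ(z) = (1/m) ∑_{k=0}^{m−1} L^{−k}(f^{∘k}(z)). Then ψ ∘ f = L ∘ ψ, and ψ is differentiable at 0 with derivative equal to the identity. -/

import Mathlib

/-- Averaging linearization: if `f` fixes `0`, `f^[m] = id`, and `f` is differentiable
at `0` with derivative a continuous linear automorphism `L` with `L^m = 1`, then
`ψ(z) = (1/m) ∑_{k<m} L^{-k}(f^[k](z))` satisfies `ψ ∘ f = L ∘ ψ` and `ψ` is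
differentiable at `0` with derivative the identity. -/
theorem stmt6 {V : Type*} [NormedAddCommGroup V] [NormedSpace ℂ V]
    [FiniteDimensional ℂ V]
    (m : ℕ) (hm : 1 ≤ m) (f : V → V) (hf0 : f 0 = 0) (hfm : f^[m] = id)
    (L : V ≃L[ℂ] V) (hL : (L : V →L[ℂ] V) ^ m = 1)
    (hdf : HasFDerivAt f (L : V →L[ℂ] V) 0)
    (ψ : V → V)
    (hψ : ∀ z : V,
      ψ z = (m : ℂ)⁻¹ • ∑ k ∈ Finset.range m, ((L.symm : V →L[ℂ] V) ^ k) (f^[k] z)) :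
    (∀ z : V, ψ (f z) = L (ψ z)) ∧ HasFDerivAt ψ (ContinuousLinearMap.id ℂ V) 0 := by
  set A : V →L[ℂ] V := (L : V →L[ℂ] V) with hA
  set B : V →L[ℂ] V := (L.symm : V →L[ℂ] V) with hB
  have hAB : A * B = 1 := by
    ext x; simp [hA, hB, ContinuousLinearMap.mul_apply]
  have hBA : B * A = 1 := by
    ext x; simp [hA, hB, ContinuousLinearMap.mul_apply]
  have hcomm : Commute B A := by
    unfold Commute SemiconjBy; rw [hBA, hAB]
  have hBm : B ^ m = 1 := by
    have : B ^ m * A ^ m = 1 := by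
      rw [← hcomm.mul_pow, hBA, one_pow]
    rw [hL] at this; simpa using this
  obtain ⟨n, rfl⟩ : ∃ n, m = n + 1 := ⟨m - 1, (Nat.succ_pred_eq_of_pos hm).symm⟩
  have hBn : B ^ n = A := by
    have : A * B ^ (n + 1) = A * 1 := by rw [hBm]
    rw [pow_succ', ← mul_assoc, hAB, one_mul, mul_one] at this
    exact this
  constructor
  · intro z
    rw [hψ z, hψ (f z), map_smul]
    congr 1
    rw [map_sum]
    have lhs : ∀ k, (B ^ k) (f^[k] (f z)) = (B ^ k) (f^[k + 1] z) := by
      intro k; rw [Function.iterate_succ_apply]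
    simp only [lhs]
    rw [Finset.sum_range_succ, Finset.sum_range_succ']
    congr 1
    · apply Finset.sum_congr rfl
      intro k _
      show (B ^ k) (f^[k + 1] z) = (A * B ^ (k + 1)) (f^[k + 1] z)
      rw [pow_succ', ← mul_assoc, hAB, one_mul]
    · have h1 : f^[n + 1] z = z := by rw [hfm]; rfl
      rw [h1, hBn]
      rfl
  · have hfun : ψ = fun z => (((n : ℕ) + 1 : ℂ))⁻¹ •
        ∑ k ∈ Finset.range (n + 1), (B ^ k) (f^[k] z) := by
      funext z; rw [hψ z]; push_cast; rfl
    rw [hfun]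
    have hiter : ∀ k, HasFDerivAt (f^[k]) (A ^ k) 0 := by
      intro k
      exact hdf.iterate hf0 k
    have hterm : ∀ k, HasFDerivAt (fun z => (B ^ k) (f^[k] z)) ((B * A) ^ k) 0 := by
      intro k
      have := ((B ^ k).hasFDerivAt (x := f^[k] 0)).comp 0 (hiter k)
      rw [hcomm.mul_pow]
      exact this
    have hsum : HasFDerivAt (fun z => ∑ k ∈ Finset.range (n + 1), (B ^ k) (f^[k] z))
        (∑ k ∈ Finset.range (n + 1), (B * A) ^ k) 0 := by
      exact HasFDerivAt.fun_sum fun k _ => hterm k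
    have hfinal := hsum.const_smul (((n : ℕ) + 1 : ℂ))⁻¹
    have heq : (((n : ℕ) + 1 : ℂ))⁻¹ • ∑ k ∈ Finset.range (n + 1), (B * A) ^ k
        = ContinuousLinearMap.id ℂ V := by
      rw [hBA]
      simp only [one_pow, Finset.sum_const, Finset.card_range]
      rw [← Nat.cast_smul_eq_nsmul ℂ, smul_smul]
      push_cast
      rw [inv_mul_cancel₀ (Nat.cast_add_one_ne_zero n)]
      simp
      rfl
    rw [heq] at hfinal
    exact hfinal
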